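/- For integers k ≥ 2 and a set X of size |X| ≥ 10k³, let F be a family of X-stable k-subsets of X with |F| ≥ (1/(2|X|))·N_X, where N_X is the number of X-stable k-subsets of X, let γ ∈ (0,1], and let j ∈ X belong to at least γ·|F| sets of F. Then for every k-set A with j ∉ A, the fraction of members of F disjoint from A is at least γ − 1/4. -/

import Mathlib

open Finset

attribute [local instance] Classical.propDecidable

/-- `a` and `b` are cyclically adjacent in the cycle on `X` ordered increasingly. -/
def CyclAdj (X : Finset ℕ) (a b : ℕ) : Prop :=
  a ≠ b ∧ ((∀ c ∈ X, ¬(min a b < c ∧ c < max a b)) ∨ (∀ c ∈ X, min a b ≤ c ∧ c ≤ max a b))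

/-- `A` is an `X`-stable subset: an independent set in the cycle on `X`. -/
def XStable (X A : Finset ℕ) : Prop :=
  A ⊆ X ∧ ∀ a ∈ A, ∀ b ∈ A, ¬ CyclAdj X a b

/-- The collection of `X`-stable `k`-subsets of `X`. -/
noncomputable def xStableSets (X : Finset ℕ) (k : ℕ) : Finset (Finset ℕ) :=
  (X.powersetCard k).filter (fun A => XStable X A)


lemma cross_mul {A B i j : ℕ} (hij : i ≤ j) (hjB : j ≤ B) (hBA : B ≤ A) :
    (A - i) * (B - j) ≤ (A - j) * (B - i) := by
  obtain ⟨e, rfl⟩ := Nat.exists_eq_add_of_le hij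
  obtain ⟨d, rfl⟩ := Nat.exists_eq_add_of_le hjB
  obtain ⟨c, rfl⟩ := Nat.exists_eq_add_of_le hBA
  have h1 : i + e + d + c - i = e + d + c := by omega
  have h2 : i + e + d - (i + e) = d := by omega
  have h3 : i + e + d + c - (i + e) = d + c := by omega
  have h4 : i + e + d - i = e + d := by omega
  rw [h1, h2, h3, h4]
  nlinarith

lemma pow_add_le (a b : ℕ) : ∀ r : ℕ, 2 * r * b ≤ a → (a + b) ^ r * a ≤ a ^ r * (a + 2 * r * b)
  | 0, _ => by simp
  | r + 1, h => by
    have hr : 2 * r * b ≤ a := le_trans (by nlinarith) h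
    have ih := pow_add_le a b r hr
    have h2 : 2 * r * b * b ≤ a * b := Nat.mul_le_mul_right b hr
    calc (a + b) ^ (r + 1) * a = ((a + b) ^ r * a) * (a + b) := by ring
      _ ≤ (a ^ r * (a + 2 * r * b)) * (a + b) := Nat.mul_le_mul_right _ ih
      _ ≤ a ^ r * (a * (a + 2 * (r+1) * b)) := by
          rw [Nat.mul_assoc]
          refine Nat.mul_le_mul_left _ ?_
          nlinarith
      _ = a ^ (r + 1) * (a + 2 * (r + 1) * b) := by ring

lemma num3 (x t : ℕ) :
    8*((10*x^3+90*x^2+267*x+261+t)+3*x+9) * (x+3)^2 * (x+2) *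
      ((10*x^3+90*x^2+267*x+261+t)+3+4*(x+1)*(x+2))
    ≤ ((10*x^3+90*x^2+267*x+261+t)+1) * ((10*x^3+90*x^2+267*x+261+t)+2) *
      ((10*x^3+90*x^2+267*x+261+t)+3) := by
  have h : 8*((10*x^3+90*x^2+267*x+261+t)+3*x+9) * (x+3)^2 * (x+2) *
      ((10*x^3+90*x^2+267*x+261+t)+3+4*(x+1)*(x+2))
      + (7615824 + 129458*t^1 + 645*t^2 + 1*t^3 + 21643302*x^1 + 251214*x^1*t^1 + 633*x^1*t^2 + 27201681*x^2 + 202471*x^2*t^1 + 206*x^2*t^2 + 19836803*x^3 + 86696*x^3*t^1 + 22*x^3*t^2 + 9248190*x^4 + 20792*x^4*t^1 + 2858650*x^5 + 2648*x^5*t^1 + 586100*x^6 + 140*x^6*t^1 + 76940*x^7 + 5880*x^8 + 200*x^9)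
      = ((10*x^3+90*x^2+267*x+261+t)+1) * ((10*x^3+90*x^2+267*x+261+t)+2) *
      ((10*x^3+90*x^2+267*x+261+t)+3) := by ring
  calc 8*((10*x^3+90*x^2+267*x+261+t)+3*x+9) * (x+3)^2 * (x+2) *
      ((10*x^3+90*x^2+267*x+261+t)+3+4*(x+1)*(x+2)) ≤ _ := Nat.le_add_right _ _
    _ = _ := h

lemma desc_key (n k : ℕ) (hk : 3 ≤ k) (hn : 3*k ≤ n) :
    ∀ s : ℕ, s ≤ k - 2 →
      (n - 3*k + 3) ^ s * (n - 2).descFactorial s ≤ (n - k + 1) ^ s * (n - 2*k).descFactorial s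
  | 0, _ => by simp
  | s + 1, hs => by
    have ih := desc_key n k hk hn s (by omega)
    have hc : ((n-2) - s) * ((n-2*k) - (k-3)) ≤ ((n-2) - (k-3)) * ((n-2*k) - s) :=
      cross_mul (by omega) (by omega) (by omega)
    have e1 : (n-2*k) - (k-3) = n - 3*k + 3 := by omega
    have e2 : (n-2) - (k-3) = n - k + 1 := by omega
    rw [e1, e2] at hc
    calc (n - 3*k + 3) ^ (s+1) * (n - 2).descFactorial (s+1)
        = (((n-2) - s) * (n - 3*k + 3)) * ((n - 3*k + 3) ^ s * (n - 2).descFactorial s) := by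
          rw [Nat.descFactorial_succ]; ring
      _ ≤ ((n - k + 1) * ((n-2*k) - s)) * ((n - k + 1) ^ s * (n - 2*k).descFactorial s) :=
          Nat.mul_le_mul hc ih
      _ = (n - k + 1) ^ (s+1) * (n - 2*k).descFactorial (s+1) := by
          rw [Nat.descFactorial_succ]; ring

lemma arith_core (k n : ℕ) (hk : 2 ≤ k) (hn : 10 * k ^ 3 ≤ n) :
    8 * n * k * Nat.choose (n - 2) (k - 2) ≤ Nat.choose (n - 2 * k) k := by
  have hk3 : 8 ≤ k ^ 3 := by calc (8:ℕ) = 2^3 := rfl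
                                _ ≤ k^3 := Nat.pow_le_pow_left hk 3
  have hkk : k ≤ k ^ 3 := Nat.le_self_pow (by norm_num) k
  have hn80 : 80 ≤ n := by nlinarith
  have h10k : 10 * k ≤ n := by nlinarith
  rcases Nat.lt_or_ge k 3 with hk2 | hk3'
  · -- k = 2
    have hk2' : k = 2 := by omega
    subst hk2'
    simp only [show (2:ℕ) - 2 = 0 from rfl, Nat.choose_zero_right, Nat.mul_one]
    rw [Nat.choose_two_right]
    rw [Nat.le_div_iff_mul_le (by norm_num)]
    obtain ⟨d, rfl⟩ : ∃ d, n = 80 + d := ⟨n - 80, by omega⟩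
    have e1 : 80 + d - 2*2 = 76 + d := by omega
    have e2 : 76 + d - 1 = 75 + d := by omega
    rw [e1, e2]
    nlinarith
  · -- k ≥ 3
    obtain ⟨x, rfl⟩ : ∃ x, k = x + 3 := ⟨k - 3, by omega⟩
    obtain ⟨t, hnt⟩ : ∃ t, n = 10*(x+3)^3 + t := ⟨n - 10*(x+3)^3, by omega⟩
    have hexp : 10*(x+3)^3 = 10*x^3+90*x^2+270*x+270 := by ring
    set E : ℕ := 10*x^3+90*x^2+267*x+261+t with hE
    have hnE : n = E + 3*x + 9 := by omega
    set r : ℕ := x + 1 with hr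
    have hrk : (x+3) - 2 = r := by omega
    set m : ℕ := n - 2*(x+3) with hm
    have hmE : m = E + x + 3 := by omega
    -- descFactorial key at s = r
    have hkey := desc_key n (x+3) (by omega) (by omega) r (by omega)
    have eP : n - 3*(x+3) + 3 = E + 3 := by omega
    have eQ : n - (x+3) + 1 = E + 2*x + 7 := by omega
    rw [eP, eQ, ← hm] at hkey
    -- power bound : (E+3 + (2*r+2))^r * (E+3) ≤ (E+3)^r * (E+3 + 2*r*(2*r+2))
    have hpow := pow_add_le (E+3) (2*r+2) r (by nlinarith [sq_nonneg x])
    have eQ2 : E + 3 + (2*r+2) = E + 2*x + 7 := by omega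
    rw [eQ2] at hpow
    -- numeric bound
    have hnum := num3 x t
    rw [← hE] at hnum
    -- now the chain, multiplied by W = (r+2)! * (E+3)^r * (E+3)
    have hD2 : (n-2).descFactorial r = r.factorial * (n-2).choose r :=
      Nat.descFactorial_eq_factorial_mul_choose _ _
    have hDm : m.descFactorial (r+2) = (r+2).factorial * m.choose (r+2) :=
      Nat.descFactorial_eq_factorial_mul_choose _ _
    have hDm2 : m.descFactorial (r+2) = (m - (r+1)) * ((m - r) * m.descFactorial r) := by
      rw [Nat.descFactorial_succ, Nat.descFactorial_succ]
    have em1 : m - (r+1) = E + 1 := by omega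
    have em2 : m - r = E + 2 := by omega
    rw [em1, em2] at hDm2
    have hkr : x + 3 = r + 2 := by omega
    rw [hrk, hkr]
    -- reduce to multiplied inequality
    have hW : 0 < (r+2).factorial * ((E+3)^r * (E+3)) :=
      Nat.mul_pos (Nat.factorial_pos _) (Nat.mul_pos (pow_pos (by omega) r) (by omega))
    refine Nat.le_of_mul_le_mul_right ?_ hW
    have hfact : (r+2).factorial = (r+2) * ((r+1) * r.factorial) := by
      rw [Nat.factorial_succ, Nat.factorial_succ]
    calc 8 * n * (r+2) * (n-2).choose r * ((r+2).factorial * ((E+3)^r * (E+3)))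
        = (8 * n * (r+2)^2 * (r+1)) * ((E+3)^r * (n-2).descFactorial r) * (E+3) := by
          rw [hD2, hfact]; ring
      _ ≤ (8 * n * (r+2)^2 * (r+1)) * ((E+2*x+7)^r * m.descFactorial r) * (E+3) := by
          exact Nat.mul_le_mul_right _ (Nat.mul_le_mul_left _ hkey)
      _ = (8 * n * (r+2)^2 * (r+1)) * m.descFactorial r * ((E+2*x+7)^r * (E+3)) := by ring
      _ ≤ (8 * n * (r+2)^2 * (r+1)) * m.descFactorial r * ((E+3)^r * (E+3+2*r*(2*r+2))) := by
          exact Nat.mul_le_mul_left _ hpow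
      _ = (8 * (E+3*x+9) * (x+3)^2 * (x+2) * (E+3+4*(x+1)*(x+2))) *
            (m.descFactorial r * (E+3)^r) := by
          rw [hnE, hr]; ring
      _ ≤ ((E+1) * (E+2) * (E+3)) * (m.descFactorial r * (E+3)^r) := by
          exact Nat.mul_le_mul_right _ hnum
      _ = m.descFactorial (r+2) * ((E+3)^r * (E+3)) := by rw [hDm2]; ring
      _ = m.choose (r+2) * ((r+2).factorial * ((E+3)^r * (E+3))) := by rw [hDm]; ring
lemma cyclAdj_comm {X : Finset ℕ} {a b : ℕ} (h : CyclAdj X a b) : CyclAdj X b a := by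
  obtain ⟨hne, h⟩ := h
  exact ⟨hne.symm, by rwa [min_comm b a, max_comm b a]⟩

lemma stable_lower (X : Finset ℕ) (k : ℕ) (hk : 1 ≤ k) (hkn : 3 * k ≤ X.card) :
    (X.card - 2 * k).choose k ≤ (xStableSets X k).card := by
  set n := X.card with hn
  have hn0 : 0 < n := by omega
  set e : Fin n ↪o ℕ := X.orderEmbOfFin rfl with he
  have he_mem : ∀ i : Fin n, e i ∈ X := fun i => X.orderEmbOfFin_mem rfl i
  have he_surj : ∀ y ∈ X, ∃ i : Fin n, e i = y := by
    intro y hy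
    have : y ∈ Set.range e := by rw [X.range_orderEmbOfFin rfl]; exact hy
    exact this
  -- rank of e i in X is i
  have rank_e : ∀ i : Fin n, (X.filter (· < e i)).card = (i : ℕ) := by
    intro i
    have himg : X.filter (· < e i) = (Finset.Iio i).image (fun j => e j) := by
      ext y
      simp only [mem_filter, mem_image, mem_Iio]
      constructor
      · rintro ⟨hyX, hylt⟩
        obtain ⟨j, rfl⟩ := he_surj y hyX
        exact ⟨j, e.strictMono.lt_iff_lt.mp hylt, rfl⟩
      · rintro ⟨j, hji, rfl⟩
        exact ⟨he_mem j, e.strictMono hji⟩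
    rw [himg, Finset.card_image_of_injective _ e.injective, Fin.card_Iio]
  -- the shift function
  set f : Finset ℕ → ℕ → ℕ := fun S s => s + 2 * ((S.filter (· < s)).card + 1) with hf
  set E : Finset ℕ → ℕ → ℕ := fun S s => e ⟨f S s % n, Nat.mod_lt _ hn0⟩ with hE
  set Φ : Finset ℕ → Finset ℕ := fun S => S.image (E S) with hΦ
  -- facts about f for S in the domain
  have hdom : ∀ S ∈ (Finset.range (n - 2 * k)).powersetCard k,
      S ⊆ Finset.range (n - 2 * k) ∧ S.card = k := by
    intro S hS
    rw [mem_powersetCard] at hS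
    exact hS
  have hf_lt : ∀ S, S ⊆ Finset.range (n - 2 * k) → S.card = k → ∀ s ∈ S, f S s < n := by
    intro S hSsub hScard s hs
    have hs' : s < n - 2 * k := Finset.mem_range.mp (hSsub hs)
    have hcard : (S.filter (· < s)).card < k := by
      have hsub : S.filter (· < s) ⊆ S.erase s := by
        intro u hu
        rw [mem_filter] at hu
        exact Finset.mem_erase.mpr ⟨Nat.ne_of_lt hu.2, hu.1⟩
      calc (S.filter (· < s)).card ≤ (S.erase s).card := Finset.card_le_card hsub
        _ < S.card := Finset.card_erase_lt_of_mem hs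
        _ = k := hScard
    simp only [hf]
    omega
  have hf_ge2 : ∀ S s, 2 ≤ f S s := by intro S s; simp only [hf]; omega
  have hf_mono : ∀ S, ∀ s ∈ S, ∀ s' ∈ S, s < s' → f S s + 3 ≤ f S s' := by
    intro S s hs s' hs' hss
    have hsub : insert s (S.filter (· < s)) ⊆ S.filter (· < s') := by
      intro u hu
      rcases Finset.mem_insert.mp hu with rfl | hu
      · exact mem_filter.mpr ⟨hs, hss⟩
      · rw [mem_filter] at hu ⊢
        exact ⟨hu.1, lt_trans hu.2 hss⟩
    have hns : s ∉ S.filter (· < s) := by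
      intro h; exact absurd (mem_filter.mp h).2 (lt_irrefl s)
    have : (S.filter (· < s)).card + 1 ≤ (S.filter (· < s')).card := by
      calc (S.filter (· < s)).card + 1 = (insert s (S.filter (· < s))).card :=
            (Finset.card_insert_of_notMem hns).symm
        _ ≤ (S.filter (· < s')).card := Finset.card_le_card hsub
    simp only [hf]
    omega
  -- E is strictly monotone on S (for S in domain)
  have hE_mono : ∀ S, S ⊆ Finset.range (n - 2 * k) → S.card = k →
      ∀ s ∈ S, ∀ s' ∈ S, s < s' → E S s < E S s' := by
    intro S hsub hcard s hs s' hs' hss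
    have h1 := hf_lt S hsub hcard s hs
    have h2 := hf_lt S hsub hcard s' hs'
    have h3 := hf_mono S s hs s' hs' hss
    simp only [hE]
    exact e.strictMono (by
      rw [Fin.mk_lt_mk, Nat.mod_eq_of_lt h1, Nat.mod_eq_of_lt h2]; omega)
  -- Φ S is a stable k-set
  have hΦ_mem : ∀ S, S ⊆ Finset.range (n - 2 * k) → S.card = k →
      Φ S ∈ xStableSets X k := by
    intro S hsub hcard
    have hEinj : Set.InjOn (E S) S := by
      intro u hu v hv huv
      by_contra hne
      rcases lt_or_gt_of_ne hne with h | h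
      · exact absurd huv (ne_of_lt (hE_mono S hsub hcard u hu v hv h))
      · exact absurd huv.symm (ne_of_lt (hE_mono S hsub hcard v hv u hu h))
    have hcardΦ : (Φ S).card = k := by
      simp only [hΦ]
      rw [Finset.card_image_of_injOn hEinj, hcard]
    have hsubΦ : Φ S ⊆ X := by
      intro y hy
      obtain ⟨s, _, rfl⟩ := Finset.mem_image.mp hy
      exact he_mem _
    -- no two elements cyclically adjacent
    have hstab : ∀ a ∈ Φ S, ∀ b ∈ Φ S, ¬ CyclAdj X a b := by
      have key : ∀ s ∈ S, ∀ s' ∈ S, s < s' → ¬ CyclAdj X (E S s) (E S s') := by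
        intro s hs s' hs' hss hC
        obtain ⟨hne, hor⟩ := hC
        have hp := hf_lt S hsub hcard s hs
        have hq := hf_lt S hsub hcard s' hs'
        have hpq := hf_mono S s hs s' hs' hss
        have hp2 := hf_ge2 S s
        have hab : E S s < E S s' := hE_mono S hsub hcard s hs s' hs' hss
        have hmin : min (E S s) (E S s') = E S s := min_eq_left hab.le
        have hmax : max (E S s) (E S s') = E S s' := max_eq_right hab.le
        have hfsval : (⟨f S s % n, Nat.mod_lt _ hn0⟩ : Fin n) = ⟨f S s, hp⟩ := by
          simp [Nat.mod_eq_of_lt hp]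
        have hfs'val : (⟨f S s' % n, Nat.mod_lt _ hn0⟩ : Fin n) = ⟨f S s', hq⟩ := by
          simp [Nat.mod_eq_of_lt hq]
        rcases hor with h1 | h2
        · -- middle element e ⟨f S s + 1⟩
          have hlt : f S s + 1 < n := by omega
          refine h1 (e ⟨f S s + 1, hlt⟩) (he_mem _) ⟨?_, ?_⟩
          · rw [hmin]
            simp only [hE, hfsval]
            exact e.strictMono (by rw [Fin.mk_lt_mk]; omega)
          · rw [hmax]
            simp only [hE, hfs'val]
            exact e.strictMono (by rw [Fin.mk_lt_mk]; omega)
        · -- element e 0 below everything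
          have h0 : (0 : ℕ) < n := hn0
          have := (h2 (e ⟨0, h0⟩) (he_mem _)).1
          rw [hmin] at this
          have hlt : e ⟨0, h0⟩ < E S s := by
            simp only [hE, hfsval]
            exact e.strictMono (by rw [Fin.mk_lt_mk]; omega)
          exact absurd this (not_le_of_gt hlt)
      intro a ha b hb hC
      obtain ⟨s, hs, rfl⟩ := Finset.mem_image.mp ha
      obtain ⟨s', hs', rfl⟩ := Finset.mem_image.mp hb
      rcases lt_trichotomy s s' with h | rfl | h
      · exact key s hs s' hs' h hC
      · exact hC.1 rfl
      · exact key s' hs' s hs h (cyclAdj_comm hC)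
    unfold xStableSets
    rw [mem_filter, mem_powersetCard]
    exact ⟨⟨hsubΦ, hcardΦ⟩, hsubΦ, hstab⟩
  -- recovery map
  set Ψ : Finset ℕ → Finset ℕ := fun T =>
    T.image (fun y => (X.filter (· < y)).card - 2 * ((T.filter (· < y)).card + 1)) with hΨ
  have hrec : ∀ S, S ⊆ Finset.range (n - 2 * k) → S.card = k → Ψ (Φ S) = S := by
    intro S hsub hcard
    have hEinj : Set.InjOn (E S) S := by
      intro u hu v hv huv
      by_contra hne
      rcases lt_or_gt_of_ne hne with h | h
      · exact absurd huv (ne_of_lt (hE_mono S hsub hcard u hu v hv h))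
      · exact absurd huv.symm (ne_of_lt (hE_mono S hsub hcard v hv u hu h))
    -- rank in X of E S s is f S s
    have hrX : ∀ s ∈ S, (X.filter (· < E S s)).card = f S s := by
      intro s hs
      have hp := hf_lt S hsub hcard s hs
      have hval : E S s = e ⟨f S s, hp⟩ := by
        simp only [hE]
        congr 1
        exact Fin.ext (Nat.mod_eq_of_lt hp)
      rw [hval]
      exact rank_e ⟨f S s, hp⟩
    -- rank in Φ S of E S s is rank of s in S
    have hrT : ∀ s ∈ S, ((Φ S).filter (· < E S s)).card = (S.filter (· < s)).card := by
      intro s hs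
      have himg : (Φ S).filter (· < E S s) = (S.filter (· < s)).image (E S) := by
        ext y
        simp only [mem_filter, mem_image, hΦ]
        constructor
        · rintro ⟨⟨u, hu, rfl⟩, hlt⟩
          refine ⟨u, ⟨hu, ?_⟩, rfl⟩
          rcases lt_trichotomy u s with h | rfl | h
          · exact h
          · exact absurd hlt (lt_irrefl _)
          · exact absurd hlt (not_lt_of_gt (hE_mono S hsub hcard s hs u hu h))
        · rintro ⟨u, ⟨hu, hus⟩, rfl⟩
          exact ⟨⟨u, hu, rfl⟩, hE_mono S hsub hcard u hu s hs hus⟩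
      rw [himg, Finset.card_image_of_injOn (hEinj.mono (by
        intro u hu; exact (mem_filter.mp hu).1))]
    have : (Φ S).image (fun y => (X.filter (· < y)).card - 2 * (((Φ S).filter (· < y)).card + 1))
        = S.image id := by
      simp only [hΦ]
      rw [Finset.image_image]
      apply Finset.image_congr
      intro s hs
      simp only [Function.comp_apply, id_eq]
      have h1 := hrX s hs
      have h2 := hrT s hs
      simp only [hΦ] at h1 h2
      rw [h1, h2]
      simp only [hf]
      omega
    simp only [hΨ]
    rw [this, Finset.image_id]
  -- conclude by injectivity
  have hinj : Set.InjOn Φ ((Finset.range (n - 2 * k)).powersetCard k) := by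
    intro S hS S' hS' h
    obtain ⟨h1, h2⟩ := hdom S hS
    obtain ⟨h1', h2'⟩ := hdom S' hS'
    rw [← hrec S h1 h2, ← hrec S' h1' h2', h]
  calc (n - 2 * k).choose k = ((Finset.range (n - 2 * k)).powersetCard k).card := by
        rw [Finset.card_powersetCard, Finset.card_range]
    _ ≤ (xStableSets X k).card := by
        apply Finset.card_le_card_of_injOn Φ
        · intro S hS
          obtain ⟨h1, h2⟩ := hdom S hS
          exact hΦ_mem S h1 h2
        · exact hinj

lemma pair_bound (X : Finset ℕ) (k : ℕ) (F : Finset (Finset ℕ)) (hF : F ⊆ xStableSets X k)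
    (j a : ℕ) (hja : a ≠ j) (hjX : j ∈ X) :
    (F.filter (fun B => j ∈ B ∧ a ∈ B)).card ≤ (X.card - 2).choose (k - 2) := by
  rcases (F.filter (fun B => j ∈ B ∧ a ∈ B)).eq_empty_or_nonempty with he | ⟨B0, hB0⟩
  · simp [he]
  · have hmemX : ∀ B ∈ F.filter (fun B => j ∈ B ∧ a ∈ B),
        B ⊆ X ∧ B.card = k ∧ j ∈ B ∧ a ∈ B := by
      intro B hB
      rw [mem_filter] at hB
      have hBs := hF hB.1
      unfold xStableSets at hBs
      rw [mem_filter, mem_powersetCard] at hBs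
      exact ⟨hBs.1.1, hBs.1.2, hB.2⟩
    obtain ⟨hB0X, hB0c, hjB0, haB0⟩ := hmemX B0 hB0
    have haX : a ∈ X := hB0X haB0
    have hcard2 : ((X.erase j).erase a).card = X.card - 2 := by
      rw [Finset.card_erase_of_mem (Finset.mem_erase.mpr ⟨hja, haX⟩),
        Finset.card_erase_of_mem hjX]
      omega
    calc (F.filter (fun B => j ∈ B ∧ a ∈ B)).card
        ≤ (((X.erase j).erase a).powersetCard (k - 2)).card := by
          apply Finset.card_le_card_of_injOn (fun B => (B.erase j).erase a)
          · intro B hB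
            obtain ⟨hBX, hBc, hjB, haB⟩ := hmemX B hB
            have hk2 : 2 ≤ k := by
              have : ({j, a} : Finset ℕ) ⊆ B := by
                intro u hu
                rcases Finset.mem_insert.mp hu with rfl | hu
                · exact hjB
                · rw [Finset.mem_singleton.mp hu]; exact haB
              have h2 : ({j, a} : Finset ℕ).card = 2 := by
                rw [Finset.card_insert_of_notMem (by simp [hja.symm]), Finset.card_singleton]
              calc 2 = ({j, a} : Finset ℕ).card := h2.symm
                _ ≤ B.card := Finset.card_le_card this
                _ = k := hBc
            simp only [Finset.mem_coe, mem_powersetCard]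
            constructor
            · exact Finset.erase_subset_erase a (Finset.erase_subset_erase j hBX)
            · rw [Finset.card_erase_of_mem (Finset.mem_erase.mpr ⟨hja, haB⟩),
                Finset.card_erase_of_mem hjB, hBc]
              omega
          · intro B hB B' hB' h
            obtain ⟨_, _, hjB, haB⟩ := hmemX B hB
            obtain ⟨_, _, hjB', haB'⟩ := hmemX B' hB'
            have hrec : ∀ C : Finset ℕ, j ∈ C → a ∈ C →
                insert j (insert a ((C.erase j).erase a)) = C := by
              intro C hjC haC
              rw [Finset.insert_erase (Finset.mem_erase.mpr ⟨hja, haC⟩),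
                Finset.insert_erase hjC]
            have h' : (B.erase j).erase a = (B'.erase j).erase a := h
            rw [← hrec B hjB haB, ← hrec B' hjB' haB', h']
      _ = (X.card - 2).choose (k - 2) := by
          rw [Finset.card_powersetCard, hcard2]

theorem stmt_12 (k : ℕ) (hk : 2 ≤ k) (X : Finset ℕ) (hX : 10 * k ^ 3 ≤ X.card)
    (F : Finset (Finset ℕ)) (hF : F ⊆ xStableSets X k)
    (hsize : (1 / (2 * X.card)) * ((xStableSets X k).card : ℝ) ≤ (F.card : ℝ))
    (γ : ℝ) (hγ0 : 0 < γ) (hγ1 : γ ≤ 1) (j : ℕ) (hj : j ∈ X)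
    (hpop : γ * F.card ≤ ((F.filter (fun B => j ∈ B)).card : ℝ))
    (A : Finset ℕ) (hAcard : A.card = k) (hjA : j ∉ A) :
    γ - 1 / 4 ≤ ((F.filter (fun B => Disjoint A B)).card : ℝ) / (F.card : ℝ) := by
  set n := X.card with hn
  have hk3 : 8 ≤ k ^ 3 := by calc (8:ℕ) = 2^3 := rfl
                                _ ≤ k^3 := Nat.pow_le_pow_left hk 3
  have hkk : k ≤ k ^ 3 := Nat.le_self_pow (by norm_num) k
  have hn80 : 80 ≤ n := by nlinarith
  have h3k : 3 * k ≤ n := by nlinarith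
  -- lower bound on the number of stable sets
  have hA := stable_lower X k (by omega) h3k
  have harith := arith_core k n hk hX
  have hCpos : 0 < (n - 2 * k).choose k := Nat.choose_pos (by omega)
  have hNpos : 0 < (xStableSets X k).card := lt_of_lt_of_le hCpos hA
  -- F is nonempty
  have hFpos : 0 < F.card := by
    rcases Nat.eq_zero_or_pos F.card with h0 | h
    · exfalso
      rw [h0] at hsize
      have h1 : (0:ℝ) < (1 / (2 * (n:ℝ))) * ((xStableSets X k).card : ℝ) :=
        mul_pos (by positivity) (by exact_mod_cast hNpos)
      simp only [Nat.cast_zero] at hsize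
      linarith
    · exact h
  have hFposR : (0:ℝ) < (F.card : ℝ) := by exact_mod_cast hFpos
  -- counting: popular sets either avoid A or contain j together with some a ∈ A
  have hcount : (F.filter (fun B => j ∈ B)).card ≤
      (F.filter (fun B => Disjoint A B)).card + k * ((n - 2).choose (k - 2)) := by
    have hsubU : F.filter (fun B => j ∈ B) ⊆
        (F.filter (fun B => Disjoint A B)) ∪
          A.biUnion (fun a => F.filter (fun B => j ∈ B ∧ a ∈ B)) := by
      intro B hB
      rw [mem_filter] at hB
      by_cases hd : Disjoint A B
      · exact Finset.mem_union_left _ (mem_filter.mpr ⟨hB.1, hd⟩)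
      · obtain ⟨a, haA, haB⟩ := Finset.not_disjoint_iff.mp hd
        exact Finset.mem_union_right _
          (Finset.mem_biUnion.mpr ⟨a, haA, mem_filter.mpr ⟨hB.1, hB.2, haB⟩⟩)
    have hsum : ∑ a ∈ A, (F.filter (fun B => j ∈ B ∧ a ∈ B)).card ≤
        k * ((n - 2).choose (k - 2)) := by
      have := Finset.sum_le_card_nsmul A (fun a => (F.filter (fun B => j ∈ B ∧ a ∈ B)).card)
        ((n - 2).choose (k - 2)) (fun a ha =>
          pair_bound X k F hF j a (fun h => hjA (h ▸ ha)) hj)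
      rwa [smul_eq_mul, hAcard] at this
    calc (F.filter (fun B => j ∈ B)).card
        ≤ ((F.filter (fun B => Disjoint A B)) ∪
            A.biUnion (fun a => F.filter (fun B => j ∈ B ∧ a ∈ B))).card :=
          Finset.card_le_card hsubU
      _ ≤ (F.filter (fun B => Disjoint A B)).card +
            (A.biUnion (fun a => F.filter (fun B => j ∈ B ∧ a ∈ B))).card :=
          Finset.card_union_le _ _
      _ ≤ (F.filter (fun B => Disjoint A B)).card + k * ((n - 2).choose (k - 2)) :=
          Nat.add_le_add_left (le_trans (Finset.card_biUnion_le) hsum) _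
  -- move to the reals
  have h1 : ((F.filter (fun B => j ∈ B)).card : ℝ) ≤
      ((F.filter (fun B => Disjoint A B)).card : ℝ) +
        (k : ℝ) * (((n - 2).choose (k - 2) : ℕ) : ℝ) := by
    exact_mod_cast hcount
  have h3 : 8 * (n:ℝ) * (k:ℝ) * (((n - 2).choose (k - 2) : ℕ) : ℝ) ≤
      ((xStableSets X k).card : ℝ) := by
    exact_mod_cast le_trans harith hA
  have h4 : ((xStableSets X k).card : ℝ) ≤ 2 * (n:ℝ) * (F.card : ℝ) := by
    have h2n : (0:ℝ) < 2 * (n:ℝ) := by positivity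
    have hmul := mul_le_mul_of_nonneg_left hsize h2n.le
    calc ((xStableSets X k).card : ℝ)
        = 2 * (n:ℝ) * (1 / (2 * (n:ℝ)) * ((xStableSets X k).card : ℝ)) := by
          field_simp
      _ ≤ 2 * (n:ℝ) * (F.card : ℝ) := hmul
  have h5 : (k : ℝ) * (((n - 2).choose (k - 2) : ℕ) : ℝ) ≤ (F.card : ℝ) / 4 := by
    have h8n : (0:ℝ) < 8 * (n:ℝ) := by positivity
    have hmm : (k : ℝ) * (((n - 2).choose (k - 2) : ℕ) : ℝ) * (8 * (n:ℝ)) ≤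
        (F.card : ℝ) / 4 * (8 * (n:ℝ)) := by nlinarith
    exact le_of_mul_le_mul_right hmm h8n
  rw [le_div_iff₀ hFposR]
  nlinarith [hpop, h1, h5]
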